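/- Let C be an [n,k] linear code with generator columns g_1,...,g_n and let V = {S_1,...,S_t} be a family of (r,δ)-repair sets satisfying Condition C1: for each i, |S_i ∩ (∪_{j≠i} S_j)| < |S_i| - δ + 1. Then rank(∪_{i=1}^t S_i) ≤ |∪_{i=1}^t S_i| - t(δ-1). -/

import Mathlib

/-- The dimension of the span of the generator-matrix columns indexed by N. -/
noncomputable def colRank (F : Type*) [Field F] {n k : ℕ} (g : Fin n → (Fin k → F))
    (N : Finset (Fin n)) : ℕ :=
  Module.finrank F (Submodule.span F (g '' ↑N))

/-- Under Condition C1, the rank of the union of t repair sets is at most its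
    size minus t(δ-1). -/
theorem stmt_13 {F : Type*} [Field F] (n k r δ t : ℕ) (hδ : 2 ≤ δ) (hr : 1 ≤ r)
    (g : Fin n → (Fin k → F))
    (S : Fin t → Finset (Fin n)) (hinj : Function.Injective S)
    (hsize : ∀ i, (S i).card ≤ r + δ - 1)
    (hrep : ∀ i, ∀ L ⊆ S i, L.card = (S i).card - (δ - 1) →
      colRank F g L = colRank F g (S i))
    (hC1 : ∀ i, (((S i) ∩ (Finset.univ.erase i).sup S).card : ℤ) <
      ((S i).card : ℤ) - δ + 1) :
    (colRank F g (Finset.univ.sup S) : ℤ) ≤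
      ((Finset.univ.sup S).card : ℤ) - t * ((δ : ℤ) - 1) := by
  classical
  set rest : Fin t → Finset (Fin n) := fun i => (Finset.univ.erase i).sup S with hrestdef
  have hsd : ∀ i, δ - 1 ≤ (S i \ rest i).card := by
    intro i
    have h1 : ((S i ∩ rest i).card : ℤ) < ((S i).card : ℤ) - δ + 1 := hC1 i
    have h2 := Finset.card_inter_add_card_sdiff (S i) (rest i)
    omega
  choose T hTsub hTcard using fun i => Finset.exists_subset_card_eq (hsd i)
  have hTS : ∀ i, T i ⊆ S i := fun i => (hTsub i).trans (Finset.sdiff_subset)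
  have hTrest : ∀ i, Disjoint (T i) (rest i) :=
    fun i => Finset.disjoint_of_subset_left (hTsub i) Finset.sdiff_disjoint
  have hSrest : ∀ i j, j ≠ i → S j ⊆ rest i := by
    intro i j hji
    exact fun x hx => Finset.mem_sup.2 ⟨j, Finset.mem_erase.2 ⟨hji, Finset.mem_univ j⟩, hx⟩
  set U : Finset (Fin n) := Finset.univ.sup S with hUdef
  set Tall : Finset (Fin n) := Finset.univ.biUnion T with hTalldef
  have hSU : ∀ i, S i ⊆ U := fun i x hx => Finset.mem_sup.2 ⟨i, Finset.mem_univ i, hx⟩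
  have hTallU : Tall ⊆ U := by
    intro x hx
    obtain ⟨i, _, hi⟩ := Finset.mem_biUnion.1 hx
    exact hSU i (hTS i hi)
  have hTallcard : Tall.card = t * (δ - 1) := by
    rw [hTalldef, Finset.card_biUnion]
    · simp [hTcard, Finset.sum_const, Finset.card_univ]
    · intro i _ j _ hij
      exact Finset.disjoint_of_subset_right ((hTS j).trans (hSrest i j (Ne.symm hij)))
        (hTrest i)
  -- the key span equality
  have hspan : Submodule.span F (g '' ↑U) = Submodule.span F (g '' ↑(U \ Tall)) := by
    apply le_antisymm
    · rw [Submodule.span_le]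
      rintro x ⟨a, ha, rfl⟩
      by_cases hx : a ∈ Tall
      · obtain ⟨i, _, hi⟩ := Finset.mem_biUnion.1 hx
        have haS : a ∈ S i := hTS i hi
        have hLcard : (S i \ T i).card = (S i).card - (δ - 1) := by
          rw [Finset.card_sdiff_of_subset (hTS i), hTcard i]
        have hrk := hrep i (S i \ T i) Finset.sdiff_subset hLcard
        have hle : Submodule.span F (g '' ↑(S i \ T i)) ≤ Submodule.span F (g '' ↑(S i)) :=
          Submodule.span_mono (Set.image_mono (by exact_mod_cast Finset.sdiff_subset))
        have heq : Submodule.span F (g '' ↑(S i \ T i)) = Submodule.span F (g '' ↑(S i)) :=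
          Submodule.eq_of_le_of_finrank_eq hle hrk
        have hmem : g a ∈ Submodule.span F (g '' ↑(S i)) :=
          Submodule.subset_span ⟨a, by exact_mod_cast haS, rfl⟩
        rw [← heq] at hmem
        have hLsub : (S i \ T i : Finset (Fin n)) ⊆ U \ Tall := by
          intro y hy
          have hyS : y ∈ S i := (Finset.mem_sdiff.1 hy).1
          have hyT : y ∉ T i := (Finset.mem_sdiff.1 hy).2
          refine Finset.mem_sdiff.2 ⟨hSU i hyS, ?_⟩
          intro hyTall
          obtain ⟨j, _, hj⟩ := Finset.mem_biUnion.1 hyTall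
          by_cases hji : j = i
          · exact hyT (hji ▸ hj)
          · exact (Finset.disjoint_left.1 (hTrest j)) hj (hSrest j i (Ne.symm hji) hyS)
        exact Submodule.span_mono (Set.image_mono (by exact_mod_cast hLsub)) hmem
      · exact Submodule.subset_span ⟨a, by
          exact_mod_cast Finset.mem_sdiff.2 ⟨ha, hx⟩, rfl⟩
    · exact Submodule.span_mono (Set.image_mono (by
        exact_mod_cast (Finset.sdiff_subset : U \ Tall ⊆ U)))
  have hcolrk : colRank F g U = colRank F g (U \ Tall) := by
    unfold colRank
    rw [hspan]
  have hrank_le : colRank F g (U \ Tall) ≤ (U \ Tall).card := by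
    unfold colRank
    have himg : g '' ↑(U \ Tall) = ↑((U \ Tall).image g) := by
      simp [Finset.coe_image]
    rw [himg]
    exact (finrank_span_finset_le_card _).trans Finset.card_image_le
  have hUT : (U \ Tall).card = U.card - Tall.card := Finset.card_sdiff_of_subset hTallU
  have hle' : Tall.card ≤ U.card := Finset.card_le_card hTallU
  have hcast : (Tall.card : ℤ) = t * ((δ : ℤ) - 1) := by
    rw [hTallcard]
    push_cast [Nat.cast_sub (by omega : 1 ≤ δ)]
    ring
  have : (colRank F g U : ℤ) ≤ (U.card : ℤ) - Tall.card := by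
    rw [hcolrk]
    have := hrank_le
    omega
  linarith [this, hcast.symm.le]
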